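/- Let L > 0, let φ : ℝ → ℝ be continuously differentiable with φ(0) = 0, and let d ∈ (0, L]. Then ∫₀ᴸ φ(x)² dx ≤ (d²/2) ∫₀ᴸ (φ'(x))² dx + (1/d) ∫₀ᴸ x φ(x)² dx. -/

import Mathlib

open intervalIntegral MeasureTheory

/-- Cauchy–Schwarz for interval integrals: `(∫₀ˣ f)² ≤ x ∫₀ˣ f²` for continuous `f`. -/
lemma cs_aux (f : ℝ → ℝ) (hf : Continuous f) {x : ℝ} (hx : 0 ≤ x) :
    (∫ t in (0:ℝ)..x, f t) ^ 2 ≤ x * ∫ t in (0:ℝ)..x, (f t) ^ 2 := by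
  set F : ℝ → ℝ := fun y => ∫ t in (0:ℝ)..y, f t with hF
  set G : ℝ → ℝ := fun y => ∫ t in (0:ℝ)..y, (f t) ^ 2 with hG
  set g : ℝ → ℝ := fun y => y * G y - (F y) ^ 2 with hg
  have hf2 : Continuous fun t => (f t) ^ 2 := hf.pow 2
  have hF' : ∀ y, HasDerivAt F (f y) y := fun y =>
    intervalIntegral.integral_hasDerivAt_right (hf.intervalIntegrable _ _)
      (hf.stronglyMeasurableAtFilter _ _) hf.continuousAt
  have hG' : ∀ y, HasDerivAt G ((f y) ^ 2) y := fun y =>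
    intervalIntegral.integral_hasDerivAt_right (hf2.intervalIntegrable _ _)
      (hf2.stronglyMeasurableAtFilter _ _) hf2.continuousAt
  have hg' : ∀ y, HasDerivAt g (G y + y * (f y) ^ 2 - 2 * F y * f y) y := by
    intro y
    have h1 := ((hasDerivAt_id y).mul (hG' y)).sub ((hF' y).pow 2)
    refine HasDerivAt.congr_deriv (f := g) h1 ?_
    simp only [id_eq]
    ring
  have hderiv : ∀ y, deriv g y = G y + y * (f y) ^ 2 - 2 * F y * f y :=
    fun y => (hg' y).deriv
  have hmono : MonotoneOn g (Set.Ici (0:ℝ)) := by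
    apply monotoneOn_of_deriv_nonneg (convex_Ici 0)
      (fun y _ => ((hg' y).differentiableAt).continuousAt.continuousWithinAt)
      (fun y _ => ((hg' y).differentiableAt).differentiableWithinAt)
    intro y hy
    rw [interior_Ici] at hy
    rw [hderiv y]
    have hy0 : (0:ℝ) ≤ y := le_of_lt hy
    have key : G y + y * (f y) ^ 2 - 2 * F y * f y
        = ∫ t in (0:ℝ)..y, (f t - f y) ^ 2 := by
      have : (fun t => (f t - f y) ^ 2)
          = fun t => (f t) ^ 2 - 2 * f y * f t + (f y) ^ 2 := by
        funext t; ring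
      rw [this]
      rw [intervalIntegral.integral_add (((hf2).intervalIntegrable _ _).sub
        ((hf.intervalIntegrable _ _).const_mul _)) (intervalIntegrable_const),
        intervalIntegral.integral_sub (hf2.intervalIntegrable _ _)
          ((hf.intervalIntegrable _ _).const_mul _),
        intervalIntegral.integral_const_mul, intervalIntegral.integral_const]
      simp only [hF, hG, smul_eq_mul, sub_zero]
      ring
    rw [key]
    apply intervalIntegral.integral_nonneg hy0
    intro t _; positivity
  have h0 : g 0 = 0 := by simp [hg, hF, hG]
  have := hmono (Set.self_mem_Ici) (Set.mem_Ici.2 hx) hx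
  rw [h0] at this
  simp only [hg] at this
  linarith

/-- Weighted Poincaré-type inequality (Coron–Crépeau, Lemma 16): for `φ` of class `C¹`
with `φ(0) = 0` and every `d ∈ (0, L]`,
`∫₀ᴸ φ² ≤ (d²/2) ∫₀ᴸ (φ')² + (1/d) ∫₀ᴸ x φ²`. -/
theorem weighted_poincare (L : ℝ) (hL : 0 < L) (φ : ℝ → ℝ)
    (hφ : ContDiff ℝ 1 φ) (h0 : φ 0 = 0) (d : ℝ) (hd : d ∈ Set.Ioc (0 : ℝ) L) :
    (∫ x in (0 : ℝ)..L, (φ x) ^ 2) ≤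
      (d ^ 2 / 2) * (∫ x in (0 : ℝ)..L, (deriv φ x) ^ 2) +
        (1 / d) * ∫ x in (0 : ℝ)..L, x * (φ x) ^ 2 := by
  obtain ⟨hd0, hdL⟩ := hd
  have hc : Continuous φ := hφ.continuous
  have hc' : Continuous (deriv φ) := hφ.continuous_deriv le_rfl
  have hc2 : Continuous fun x => (φ x) ^ 2 := hc.pow 2
  have hcx2 : Continuous fun x => x * (φ x) ^ 2 := continuous_id.mul hc2
  have hc'2 : Continuous fun x => (deriv φ x) ^ 2 := hc'.pow 2
  set C : ℝ := ∫ x in (0:ℝ)..L, (deriv φ x) ^ 2 with hC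
  -- FTC : φ x = ∫₀ˣ φ'
  have hftc : ∀ x : ℝ, φ x = ∫ t in (0:ℝ)..x, deriv φ t := by
    intro x
    rw [intervalIntegral.integral_deriv_eq_sub
      (fun t _ => (hφ.differentiable one_ne_zero) t) (hc'.intervalIntegrable _ _), h0, sub_zero]
  -- pointwise bound on [0, d] : φ(x)² ≤ x * C
  have hpt : ∀ x ∈ Set.Icc (0:ℝ) d, (φ x) ^ 2 ≤ x * C := by
    intro x hx
    obtain ⟨hx0, hxd⟩ := hx
    have h1 : (φ x) ^ 2 ≤ x * ∫ t in (0:ℝ)..x, (deriv φ t) ^ 2 := by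
      rw [hftc x]; exact cs_aux (deriv φ) hc' hx0
    have h2 : (∫ t in (0:ℝ)..x, (deriv φ t) ^ 2) ≤ C := by
      apply intervalIntegral.integral_mono_interval le_rfl hx0 (hxd.trans hdL)
      · filter_upwards with t; positivity
      · exact hc'2.intervalIntegrable _ _
    nlinarith
  -- first piece
  have hA : (∫ x in (0:ℝ)..d, (φ x) ^ 2) ≤ d ^ 2 / 2 * C := by
    calc (∫ x in (0:ℝ)..d, (φ x) ^ 2) ≤ ∫ x in (0:ℝ)..d, x * C :=
          intervalIntegral.integral_mono_on hd0.le (hc2.intervalIntegrable _ _)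
            ((continuous_id.mul continuous_const).intervalIntegrable _ _) hpt
      _ = d ^ 2 / 2 * C := by
          rw [intervalIntegral.integral_mul_const, integral_id]; ring
  -- second piece
  have hB : (∫ x in d..L, (φ x) ^ 2) ≤ (1 / d) * ∫ x in d..L, x * (φ x) ^ 2 := by
    have hmono : ∀ x ∈ Set.Icc d L, (φ x) ^ 2 ≤ (1 / d) * (x * (φ x) ^ 2) := by
      intro x hx
      have hsq : (0:ℝ) ≤ (φ x) ^ 2 := sq_nonneg _
      have h1 : 0 ≤ ((x - d) / d) * (φ x) ^ 2 :=
        mul_nonneg (div_nonneg (by linarith [hx.1]) hd0.le) hsq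
      have h2 : (1 / d) * (x * (φ x) ^ 2) = (φ x) ^ 2 + ((x - d) / d) * (φ x) ^ 2 := by
        field_simp; ring
      linarith
    calc (∫ x in d..L, (φ x) ^ 2) ≤ ∫ x in d..L, (1 / d) * (x * (φ x) ^ 2) :=
          intervalIntegral.integral_mono_on hdL (hc2.intervalIntegrable _ _)
            ((continuous_const.mul hcx2).intervalIntegrable _ _) hmono
      _ = (1 / d) * ∫ x in d..L, x * (φ x) ^ 2 := intervalIntegral.integral_const_mul _ _
  -- splitting
  have hsplit : (∫ x in (0:ℝ)..L, (φ x) ^ 2)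
      = (∫ x in (0:ℝ)..d, (φ x) ^ 2) + ∫ x in d..L, (φ x) ^ 2 :=
    (intervalIntegral.integral_add_adjacent_intervals (hc2.intervalIntegrable _ _)
      (hc2.intervalIntegrable _ _)).symm
  have hsplit2 : (∫ x in (0:ℝ)..L, x * (φ x) ^ 2)
      = (∫ x in (0:ℝ)..d, x * (φ x) ^ 2) + ∫ x in d..L, x * (φ x) ^ 2 :=
    (intervalIntegral.integral_add_adjacent_intervals (hcx2.intervalIntegrable _ _)
      (hcx2.intervalIntegrable _ _)).symm
  have hpos : (0:ℝ) ≤ ∫ x in (0:ℝ)..d, x * (φ x) ^ 2 := by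
    apply intervalIntegral.integral_nonneg hd0.le
    intro t ht; exact mul_nonneg ht.1 (sq_nonneg _)
  have h1d : (0:ℝ) < 1 / d := by positivity
  rw [hsplit, hsplit2]
  nlinarith [mul_nonneg h1d.le hpos]
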